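/- Define f_{1,θ}(a) = e^{iθ} ∫_{[1,a]} √(p_a(t)) dt for a ∈ ℂ \ (-∞,-1], integrating along the straight segment from 1 to a with a fixed branch of the square root. Then f_{1,θ}(a) = (a-1)² g(a) where g is holomorphic on ℂ \ (-∞,-1] with g(1) ≠ 0. In particular a = 1 is a zero of f_{1,θ} of order exactly 2, so the level set {Re f_{1,θ} = 0} near a = 1 consists of two analytic arcs crossing orthogonally at 1 with tangent directions arg(a-1) = (-θ + kπ)/2, k = 0,1,2,3. -/

import Mathlib

section FrozenDefs

open Complex Set intervalIntegral

noncomputable section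

/-- The ray `(-∞, -1]` viewed as a subset of `ℂ`. -/
def negRay : Set ℂ := {z : ℂ | z.im = 0 ∧ z.re ≤ -1}

/-- `f_{1,θ}(a) = e^{iθ} ∫_{[1,a]} √(p_a(t)) dt`, written after parametrizing the
segment as `i e^{iθ} (a-1)² ∫₀¹ √(t(1-t)) √(t(a-1)+2) dt` with principal square roots. -/
def fOne (θ : ℝ) (a : ℂ) : ℂ :=
  Complex.I * Complex.exp (Complex.I * θ) * (a - 1) ^ 2 *
    ∫ t in (0:ℝ)..1, (Real.sqrt (t * (1 - t)) : ℂ) * (((t : ℂ) * (a - 1) + 2) ^ ((1:ℂ)/2))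

end

end FrozenDefs

noncomputable section PreOpen
open Set MeasureTheory Metric Filter

/-- Integrand. -/
def Fa (a : ℂ) (t : ℝ) : ℂ :=
  (Real.sqrt (t * (1 - t)) : ℂ) * (((t : ℂ) * (a - 1) + 2) ^ ((1:ℂ)/2))

/-- Derivative of the integrand in `a`. -/
def Fa' (a : ℂ) (t : ℝ) : ℂ :=
  (Real.sqrt (t * (1 - t)) : ℂ) *
    (((1:ℂ)/2) * ((t : ℂ) * (a - 1) + 2) ^ ((1:ℂ)/2 - 1) * ((t : ℂ) * 1))

lemma integ_diff_aux {a₀ : ℂ} {r m : ℝ} (hr : 0 < r) (hm : 0 < m)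
    (hslit : ∀ a ∈ closedBall a₀ r, ∀ t ∈ Icc (0:ℝ) 1, (t:ℂ) * (a - 1) + 2 ∈ Complex.slitPlane)
    (hbd : ∀ a ∈ closedBall a₀ r, ∀ t ∈ Icc (0:ℝ) 1, m ≤ ‖(t:ℂ) * (a - 1) + 2‖) :
    DifferentiableAt ℂ (fun a : ℂ => ∫ t in (0:ℝ)..1,
      (Real.sqrt (t * (1 - t)) : ℂ) * (((t : ℂ) * (a - 1) + 2) ^ ((1:ℂ)/2))) a₀ := by
  have hcont0 : Continuous fun t : ℝ => (Real.sqrt (t * (1 - t)) : ℂ) := by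
    refine Complex.continuous_ofReal.comp (Real.continuous_sqrt.comp (by fun_prop))
  have hinner : ∀ a : ℂ, Continuous fun t : ℝ => (t : ℂ) * (a - 1) + 2 := by
    intro a; fun_prop
  have hca : ∀ a ∈ closedBall a₀ r, ∀ t ∈ Icc (0:ℝ) 1,
      ContinuousAt (fun s : ℝ => ((s:ℂ) * (a - 1) + 2) ^ ((1:ℂ)/2)) t := by
    intro a ha t ht
    exact ContinuousAt.comp (g := (· ^ ((1:ℂ)/2))) (f := fun s : ℝ => (s:ℂ) * (a - 1) + 2)
      (x := t) (continuousAt_cpow_const (hslit a ha t ht)) ((hinner a).continuousAt)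
  have hcont : ∀ a ∈ closedBall a₀ r, ContinuousOn (Fa a) (Icc (0:ℝ) 1) := by
    intro a ha
    refine hcont0.continuousOn.mul fun t ht => ?_
    exact (hca a ha t ht).continuousWithinAt
  have hca' : ∀ t ∈ Icc (0:ℝ) 1,
      ContinuousAt (fun s : ℝ => ((s:ℂ) * (a₀ - 1) + 2) ^ ((1:ℂ)/2 - 1)) t := by
    intro t ht
    exact ContinuousAt.comp (g := (· ^ ((1:ℂ)/2 - 1))) (f := fun s : ℝ => (s:ℂ) * (a₀ - 1) + 2)
      (x := t) (continuousAt_cpow_const (hslit a₀ (mem_closedBall_self hr.le) t ht))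
      ((hinner a₀).continuousAt)
  have hcont' : ContinuousOn (Fa' a₀) (Icc (0:ℝ) 1) := by
    refine hcont0.continuousOn.mul (ContinuousOn.mul ?_ (by fun_prop))
    refine continuousOn_const.mul fun t ht => ?_
    exact (hca' t ht).continuousWithinAt
  have hF_meas : ∀ᶠ a in nhds a₀, AEStronglyMeasurable (Fa a) (volume.restrict (Ioc (0:ℝ) 1)) := by
    filter_upwards [closedBall_mem_nhds a₀ hr] with a ha
    exact ((hcont a ha).mono Ioc_subset_Icc_self).aestronglyMeasurable measurableSet_Ioc
  have hF_int : Integrable (Fa a₀) (volume.restrict (Ioc (0:ℝ) 1)) :=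
    ((hcont a₀ (mem_closedBall_self hr.le)).integrableOn_Icc).mono_set Ioc_subset_Icc_self
  have hF'_meas : AEStronglyMeasurable (Fa' a₀) (volume.restrict (Ioc (0:ℝ) 1)) :=
    (hcont'.mono Ioc_subset_Icc_self).aestronglyMeasurable measurableSet_Ioc
  have hbound_int : Integrable (fun _ : ℝ => (1/2) * m ^ (-(1/2) : ℝ))
      (volume.restrict (Ioc (0:ℝ) 1)) :=
    (continuousOn_const.integrableOn_Icc (a := (0:ℝ)) (b := 1)).mono_set Ioc_subset_Icc_self
  have hexp : (1:ℂ)/2 - 1 = ((-(1/2) : ℝ) : ℂ) := by push_cast; ring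
  have h_bound : ∀ᵐ t ∂(volume.restrict (Ioc (0:ℝ) 1)), ∀ a ∈ ball a₀ r,
      ‖Fa' a t‖ ≤ (1/2) * m ^ (-(1/2) : ℝ) := by
    filter_upwards [self_mem_ae_restrict measurableSet_Ioc] with t ht a ha
    have htI : t ∈ Icc (0:ℝ) 1 := Ioc_subset_Icc_self ht
    have haB : a ∈ closedBall a₀ r := ball_subset_closedBall ha
    have hz := hbd a haB t htI
    have h1 : ‖(Real.sqrt (t * (1 - t)) : ℂ)‖ ≤ 1 := by
      rw [Complex.norm_real, Real.norm_eq_abs, _root_.abs_of_nonneg (Real.sqrt_nonneg _)]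
      rw [Real.sqrt_le_one]
      nlinarith [htI.1, htI.2]
    have h3 : ‖((t : ℂ) * (a - 1) + 2) ^ ((1:ℂ)/2 - 1)‖ ≤ m ^ (-(1/2) : ℝ) := by
      rw [hexp, Complex.norm_cpow_real]
      exact Real.rpow_le_rpow_of_nonpos hm hz (by norm_num)
    have h4 : ‖(t : ℂ) * 1‖ ≤ 1 := by
      rw [mul_one, Complex.norm_real, Real.norm_eq_abs, _root_.abs_of_nonneg (le_of_lt ht.1)]
      exact ht.2
    calc ‖Fa' a t‖ = ‖(Real.sqrt (t * (1 - t)) : ℂ)‖ *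
          (‖(1:ℂ)/2‖ * ‖((t : ℂ) * (a - 1) + 2) ^ ((1:ℂ)/2 - 1)‖ *
            ‖(t : ℂ) * 1‖) := by
            simp [Fa', map_mul]
      _ ≤ 1 * (‖(1:ℂ)/2‖ * (m ^ (-(1/2) : ℝ)) * 1) := by
            have hnn : (0:ℝ) ≤ ‖(1:ℂ)/2‖ := norm_nonneg _
            have := mul_le_mul (mul_le_mul le_rfl h3 (norm_nonneg _) hnn) h4
              (norm_nonneg _) (by positivity)
            exact mul_le_mul h1 this (by positivity) zero_le_one
      _ = (1/2) * m ^ (-(1/2) : ℝ) := by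
            simp [Complex.norm_two]
  have h_diff : ∀ᵐ t ∂(volume.restrict (Ioc (0:ℝ) 1)), ∀ a ∈ ball a₀ r,
      HasDerivAt (fun a => Fa a t) (Fa' a t) a := by
    filter_upwards [self_mem_ae_restrict measurableSet_Ioc] with t ht a ha
    have htI : t ∈ Icc (0:ℝ) 1 := Ioc_subset_Icc_self ht
    have haB : a ∈ closedBall a₀ r := ball_subset_closedBall ha
    have hin : HasDerivAt (fun a : ℂ => (t : ℂ) * (a - 1) + 2) ((t : ℂ) * 1) a :=
      (((hasDerivAt_id a).sub_const 1).const_mul (t : ℂ)).add_const 2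
    exact (hin.cpow_const (hslit a haB t htI)).const_mul _
  have hder : HasDerivAt (fun a : ℂ => ∫ t, Fa a t ∂(volume.restrict (Ioc (0:ℝ) 1)))
      (∫ t, Fa' a₀ t ∂(volume.restrict (Ioc (0:ℝ) 1))) a₀ :=
    (hasDerivAt_integral_of_dominated_loc_of_deriv_le (F := Fa) (F' := Fa')
      (ball_mem_nhds a₀ hr) hF_meas hF_int hF'_meas h_bound hbound_int h_diff).2
  have heq : (fun a : ℂ => ∫ t in (0:ℝ)..1,
      (Real.sqrt (t * (1 - t)) : ℂ) * (((t : ℂ) * (a - 1) + 2) ^ ((1:ℂ)/2)))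
      = fun a : ℂ => ∫ t, Fa a t ∂(volume.restrict (Ioc (0:ℝ) 1)) := by
    funext a
    exact intervalIntegral.integral_of_le zero_le_one
  rw [heq]
  exact hder.differentiableAt

end PreOpen

open Complex Set intervalIntegral

noncomputable section

open MeasureTheory Metric Filter

/-- The holomorphic factor. -/
def Gfun (θ : ℝ) (a : ℂ) : ℂ :=
  Complex.I * Complex.exp (Complex.I * θ) *
    ∫ t in (0:ℝ)..1, (Real.sqrt (t * (1 - t)) : ℂ) * (((t : ℂ) * (a - 1) + 2) ^ ((1:ℂ)/2))

lemma fOne_eq (θ : ℝ) (a : ℂ) : fOne θ a = (a - 1) ^ 2 * Gfun θ a := by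
  unfold fOne Gfun; ring

lemma negRay_isClosed : IsClosed negRay := by
  have : negRay = {z : ℂ | z.im = 0} ∩ {z : ℂ | z.re ≤ -1} := rfl
  rw [this]
  exact (isClosed_eq Complex.continuous_im continuous_const).inter
    (isClosed_le Complex.continuous_re continuous_const)

lemma negRay_compl_open : IsOpen negRayᶜ := negRay_isClosed.isOpen_compl

lemma one_mem : (1 : ℂ) ∈ negRayᶜ := by
  intro h
  have := h.2
  norm_num [Complex.one_re] at this

lemma slit_mem {a : ℂ} (ha : a ∈ negRayᶜ) {t : ℝ} (ht : t ∈ Icc (0:ℝ) 1) :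
    (t : ℂ) * (a - 1) + 2 ∈ Complex.slitPlane := by
  rw [Complex.mem_slitPlane_iff]
  have hre : ((t : ℂ) * (a - 1) + 2).re = t * (a.re - 1) + 2 := by
    simp [Complex.add_re, Complex.mul_re]
  have him : ((t : ℂ) * (a - 1) + 2).im = t * a.im := by
    simp [Complex.add_im, Complex.mul_im]
  by_cases haim : a.im = 0
  · left
    have hare : -1 < a.re := by
      by_contra h
      exact ha ⟨haim, by linarith⟩
    rw [hre]
    rcases eq_or_lt_of_le ht.2 with h1 | h1
    · rw [h1]; linarith
    · nlinarith [mul_nonneg ht.1 (by linarith : (0:ℝ) ≤ a.re + 1)]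
  · rcases eq_or_lt_of_le ht.1 with h0 | h0
    · left; rw [hre, ← h0]; norm_num
    · right; rw [him]; exact mul_ne_zero (ne_of_gt h0) haim

lemma exists_ball_bound {a₀ : ℂ} (ha₀ : a₀ ∈ negRayᶜ) :
    ∃ r > 0, ∃ m > 0, closedBall a₀ r ⊆ negRayᶜ ∧
      ∀ a ∈ closedBall a₀ r, ∀ t ∈ Icc (0:ℝ) 1,
        m ≤ ‖(t:ℂ) * (a - 1) + 2‖ := by
  obtain ⟨ε, hε, hball⟩ := Metric.isOpen_iff.mp negRay_compl_open a₀ ha₀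
  have hsub : closedBall a₀ (ε/2) ⊆ negRayᶜ :=
    (closedBall_subset_ball (by linarith)).trans hball
  set K : Set ℂ := (fun p : ℝ × ℂ => (p.1 : ℂ) * (p.2 - 1) + 2) ''
      (Icc (0:ℝ) 1 ×ˢ closedBall a₀ (ε/2)) with hK
  have hcont : Continuous fun p : ℝ × ℂ => (p.1 : ℂ) * (p.2 - 1) + 2 := by fun_prop
  have hKc : IsCompact K :=
    ((isCompact_Icc).prod (isCompact_closedBall _ _)).image hcont
  have hKne : K.Nonempty := by
    refine ⟨(0:ℂ) * (a₀ - 1) + 2, ⟨(0, a₀), ⟨?_, mem_closedBall_self (by linarith)⟩, by simp⟩⟩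
    exact ⟨le_refl _, zero_le_one⟩
  obtain ⟨z₀, hz₀K, hz₀min⟩ := hKc.exists_isMinOn hKne (continuous_norm.continuousOn)
  have hz₀ne : z₀ ≠ 0 := by
    obtain ⟨⟨t, a⟩, ⟨ht, haB⟩, hz⟩ := hz₀K
    rw [← hz]
    exact Complex.slitPlane_ne_zero (slit_mem (hsub haB) ht)
  refine ⟨ε/2, by linarith, ‖z₀‖, ?_, hsub, ?_⟩
  · exact norm_pos_iff.mpr hz₀ne
  · intro a ha t ht
    exact hz₀min ⟨(t, a), ⟨ht, ha⟩, rfl⟩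

lemma integ_diff {a₀ : ℂ} (ha₀ : a₀ ∈ negRayᶜ) :
    DifferentiableAt ℂ (fun a : ℂ => ∫ t in (0:ℝ)..1,
      (Real.sqrt (t * (1 - t)) : ℂ) * (((t : ℂ) * (a - 1) + 2) ^ ((1:ℂ)/2))) a₀ := by
  obtain ⟨r, hr, m, hm, hsub, hbd⟩ := exists_ball_bound ha₀
  exact integ_diff_aux hr hm (fun a ha t ht => slit_mem (hsub ha) ht) hbd

lemma Gfun_diff (θ : ℝ) : DifferentiableOn ℂ (Gfun θ) negRayᶜ := by
  intro a ha
  exact (((integ_diff ha).const_mul _)).differentiableWithinAt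

lemma r0_pos : 0 < ∫ t in (0:ℝ)..1, Real.sqrt (t * (1 - t)) := by
  apply intervalIntegral.intervalIntegral_pos_of_pos_on
  · exact (Real.continuous_sqrt.comp (by fun_prop)).intervalIntegrable 0 1
  · intro t ht
    exact Real.sqrt_pos.2 (by nlinarith [ht.1, ht.2])
  · norm_num

lemma Gfun_one (θ : ℝ) :
    Gfun θ 1 = ((∫ t in (0:ℝ)..1, Real.sqrt (t * (1 - t))) * Real.sqrt 2 : ℝ) *
      (Complex.I * Complex.exp (Complex.I * θ)) := by
  have h2 : ((2:ℂ) ^ ((1:ℂ)/2)) = (Real.sqrt 2 : ℂ) := by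
    rw [Real.sqrt_eq_rpow, Complex.ofReal_cpow (by norm_num)]
    norm_num
  have : Gfun θ 1 = Complex.I * Complex.exp (Complex.I * θ) *
      ∫ t in (0:ℝ)..1, (Real.sqrt (t * (1 - t)) : ℂ) * ((2:ℂ) ^ ((1:ℂ)/2)) := by
    unfold Gfun
    norm_num
  rw [this, intervalIntegral.integral_mul_const, h2, intervalIntegral.integral_ofReal]
  push_cast
  ring

lemma Gfun_one_ne (θ : ℝ) : Gfun θ 1 ≠ 0 := by
  rw [Gfun_one]
  apply mul_ne_zero
  · rw [Complex.ofReal_ne_zero]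
    exact mul_ne_zero (ne_of_gt r0_pos) (by positivity)
  · exact mul_ne_zero Complex.I_ne_zero (Complex.exp_ne_zero _)

lemma Gfun_one_im (θ : ℝ) (hθ : θ ∈ Ico (0:ℝ) (Real.pi / 2)) : 0 < (Gfun θ 1).im := by
  rw [Gfun_one]
  have h : (((∫ t in (0:ℝ)..1, Real.sqrt (t * (1 - t))) * Real.sqrt 2 : ℝ) : ℂ).im = 0 := by simp
  rw [Complex.mul_im]
  have him : (Complex.I * Complex.exp (Complex.I * θ)).im = Real.cos θ := by
    rw [mul_comm Complex.I ((θ:ℂ))]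
    rw [Complex.mul_im]
    simp [Complex.exp_ofReal_mul_I_re]
  rw [h, him]
  simp only [Complex.ofReal_re, mul_zero, zero_add, add_zero, zero_mul]
  have hc : 0 < Real.cos θ := Real.cos_pos_of_mem_Ioo
    ⟨by linarith [hθ.1, Real.pi_pos], hθ.2⟩
  have h2 : 0 < (∫ t in (0:ℝ)..1, Real.sqrt (t * (1 - t))) * Real.sqrt 2 :=
    mul_pos r0_pos (Real.sqrt_pos.2 two_pos)
  exact mul_pos h2 hc

lemma Gfun_one_arg (θ : ℝ) (hθ : θ ∈ Ico (0:ℝ) (Real.pi / 2)) :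
    (Gfun θ 1).arg = θ + Real.pi / 2 := by
  rw [Gfun_one]
  have hpos : 0 < (∫ t in (0:ℝ)..1, Real.sqrt (t * (1 - t))) * Real.sqrt 2 :=
    mul_pos r0_pos (Real.sqrt_pos.2 two_pos)
  rw [Complex.arg_real_mul _ hpos]
  have key : Complex.I * Complex.exp (Complex.I * θ)
      = Complex.exp (((θ + Real.pi/2 : ℝ) : ℂ) * Complex.I) := by
    have hI : Complex.exp (((Real.pi/2 : ℝ) : ℂ) * Complex.I) = Complex.I := by
      rw [Complex.exp_mul_I, ← Complex.ofReal_cos, ← Complex.ofReal_sin,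
        Real.cos_pi_div_two, Real.sin_pi_div_two]
      simp
    rw [Complex.ofReal_add, add_mul, Complex.exp_add, hI, mul_comm Complex.I ((θ:ℂ))]
    ring
  rw [key, Complex.exp_mul_I, Complex.arg_cos_add_sin_mul_I]
  constructor
  · linarith [hθ.1, Real.pi_pos]
  · linarith [hθ.2]

theorem stmt7 (θ : ℝ) (hθ : θ ∈ Ico (0:ℝ) (Real.pi / 2)) :
    -- factorization `f_{1,θ}(a) = (a-1)² g(a)` with `g` holomorphic and `g(1) ≠ 0`
    (∃ g : ℂ → ℂ, DifferentiableOn ℂ g negRayᶜ ∧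
      (∀ a ∈ negRayᶜ, fOne θ a = (a - 1) ^ 2 * g a) ∧ g 1 ≠ 0) ∧
    -- `a = 1` is a zero of order exactly 2
    (fOne θ 1 = 0 ∧ deriv (fOne θ) 1 = 0 ∧ iteratedDeriv 2 (fOne θ) 1 ≠ 0) ∧
    -- near `a = 1` the level set `{Re f_{1,θ} = 0}` has tangent directions
    -- `arg(a-1) = (-θ + kπ)/2`
    (∀ ε > (0:ℝ), ∃ δ > (0:ℝ), ∀ a ∈ negRayᶜ, a ≠ 1 → ‖a - 1‖ < δ →
      (fOne θ a).re = 0 →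
      ∃ k : ℤ, |(a - 1).arg - (-θ + k * Real.pi) / 2| < ε) := by
  have hopen := negRay_compl_open
  have h1 := _root_.one_mem
  have hGdiff := Gfun_diff θ
  have hG1 := Gfun_one_ne θ
  have hGat : ∀ a ∈ negRayᶜ, DifferentiableAt ℂ (Gfun θ) a := fun a ha =>
    (hGdiff a ha).differentiableAt (hopen.mem_nhds ha)
  have hfd : ∀ a ∈ negRayᶜ, HasDerivAt (fOne θ)
      (2 * (a - 1) * Gfun θ a + (a - 1) ^ 2 * deriv (Gfun θ) a) a := by
    intro a ha
    have h2 : HasDerivAt (fun z : ℂ => (z - 1) ^ 2) (2 * (a - 1)) a := by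
      simpa using ((hasDerivAt_id a).sub_const 1).fun_pow 2
    have hmul := h2.fun_mul ((hGat a ha).hasDerivAt)
    have heq : (fun z : ℂ => (z - 1) ^ 2 * Gfun θ z) = fOne θ := by
      funext z; rw [fOne_eq]
    rwa [heq] at hmul
  refine ⟨⟨Gfun θ, hGdiff, fun a _ => fOne_eq θ a, hG1⟩, ⟨?_, ?_, ?_⟩, ?_⟩
  · rw [fOne_eq]; ring
  · rw [(hfd 1 h1).deriv]; ring
  · -- second derivative
    have hev : deriv (fOne θ) =ᶠ[nhds 1]
        fun a => 2 * (a - 1) * Gfun θ a + (a - 1) ^ 2 * deriv (Gfun θ) a := by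
      filter_upwards [hopen.mem_nhds h1] with a ha
      exact (hfd a ha).deriv
    have hGan : AnalyticOnNhd ℂ (Gfun θ) negRayᶜ := hGdiff.analyticOnNhd hopen
    have hdG : DifferentiableAt ℂ (deriv (Gfun θ)) 1 :=
      ((hGan.deriv) 1 h1).differentiableAt
    have hc : HasDerivAt (fun a : ℂ => 2 * (a - 1)) 2 1 := by
      have := ((hasDerivAt_id (1:ℂ)).sub_const 1).const_mul (2:ℂ)
      simpa using this
    have hterm1 := hc.fun_mul ((hGat 1 h1).hasDerivAt)
    have h2' : HasDerivAt (fun z : ℂ => (z - 1) ^ 2) (2 * ((1:ℂ) - 1)) 1 := by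
      simpa using ((hasDerivAt_id (1:ℂ)).sub_const 1).fun_pow 2
    have hterm2 := h2'.fun_mul hdG.hasDerivAt
    have hsum := hterm1.fun_add hterm2
    rw [iteratedDeriv_succ, iteratedDeriv_one, hev.deriv_eq, hsum.deriv]
    have : 2 * Gfun θ 1 + 2 * ((1:ℂ) - 1) * deriv (Gfun θ) 1 +
        (2 * ((1:ℂ) - 1) * deriv (Gfun θ) 1 + ((1:ℂ) - 1) ^ 2 * deriv (deriv (Gfun θ)) 1)
        = 2 * Gfun θ 1 := by ring
    rw [this]
    exact mul_ne_zero two_ne_zero hG1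
  · -- level set tangent directions
    intro ε hε
    have hGc : ContinuousAt (Gfun θ) 1 := (hGat 1 h1).continuousAt
    have hGslit : Gfun θ 1 ∈ Complex.slitPlane :=
      Complex.mem_slitPlane_iff.2 (Or.inr (ne_of_gt (Gfun_one_im θ hθ)))
    have hargc : ContinuousAt (fun a => (Gfun θ a).arg) 1 :=
      (Complex.continuousAt_arg hGslit).comp hGc
    obtain ⟨δ₁, hδ₁, h₁⟩ := Metric.continuousAt_iff.1 hargc ε hε
    obtain ⟨δ₂, hδ₂, h₂⟩ := Metric.continuousAt_iff.1 hGc (‖Gfun θ 1‖)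
      (norm_pos_iff.mpr hG1)
    refine ⟨min δ₁ δ₂, lt_min hδ₁ hδ₂, ?_⟩
    intro a ha hane habs hre
    have hd1 : dist a 1 < δ₁ := by
      rw [Complex.dist_eq]; exact lt_of_lt_of_le habs (min_le_left _ _)
    have hd2 : dist a 1 < δ₂ := by
      rw [Complex.dist_eq]; exact lt_of_lt_of_le habs (min_le_right _ _)
    have hGa_ne : Gfun θ a ≠ 0 := by
      intro h0
      have := h₂ hd2
      rw [h0, dist_comm, dist_zero_right] at this
      exact lt_irrefl _ this
    have hne1 : a - 1 ≠ 0 := sub_ne_zero.2 hane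
    have hfa : fOne θ a = (a - 1) ^ 2 * Gfun θ a := fOne_eq θ a
    have hfne : fOne θ a ≠ 0 := by
      rw [hfa]; exact mul_ne_zero (pow_ne_zero _ hne1) hGa_ne
    have him : (fOne θ a).im ≠ 0 := by
      intro h
      exact hfne (Complex.ext (by rw [hre]; simp) (by rw [h]; simp))
    have hη : |(Gfun θ a).arg - (θ + Real.pi/2)| < ε := by
      have := h₁ hd1
      rw [Real.dist_eq] at this
      rw [Gfun_one_arg θ hθ] at this
      exact this
    have hprod : ((fOne θ a).arg : Real.Angle)
        = ((a-1).arg : Real.Angle) + ((a-1).arg : Real.Angle) + ((Gfun θ a).arg : Real.Angle) := by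
      rw [hfa, sq, Complex.arg_mul_coe_angle (mul_ne_zero hne1 hne1) hGa_ne,
        Complex.arg_mul_coe_angle hne1 hne1]
    have hcoe : (((fOne θ a).arg : ℝ) : Real.Angle)
        = (((a-1).arg + (a-1).arg + (Gfun θ a).arg : ℝ) : Real.Angle) := by
      rw [Real.Angle.coe_add, Real.Angle.coe_add]; exact hprod
    obtain ⟨k, hk⟩ := Real.Angle.angle_eq_iff_two_pi_dvd_sub.1 hcoe
    rcases lt_or_gt_of_ne him with hlt | hgt
    · -- arg = -π/2
      have h : (fOne θ a).arg = -(Real.pi/2) :=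
        Complex.arg_eq_neg_pi_div_two_iff.2 ⟨hre, hlt⟩
      refine ⟨-1 - 2*k, ?_⟩
      have hkey : (a-1).arg - (-θ + ((-1 - 2*k : ℤ) : ℝ) * Real.pi)/2
          = -((Gfun θ a).arg - (θ + Real.pi/2))/2 := by
        rw [h] at hk
        push_cast
        linarith
      rw [hkey, abs_div, abs_neg, _root_.abs_two]
      have := abs_nonneg ((Gfun θ a).arg - (θ + Real.pi/2))
      linarith
    · -- arg = π/2
      have h : (fOne θ a).arg = Real.pi/2 :=
        Complex.arg_eq_pi_div_two_iff.2 ⟨hre, hgt⟩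
      refine ⟨-2*k, ?_⟩
      have hkey : (a-1).arg - (-θ + ((-2*k : ℤ) : ℝ) * Real.pi)/2
          = -((Gfun θ a).arg - (θ + Real.pi/2))/2 := by
        rw [h] at hk
        push_cast
        linarith
      rw [hkey, abs_div, abs_neg, _root_.abs_two]
      have := abs_nonneg ((Gfun θ a).arg - (θ + Real.pi/2))
      linarith
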